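/- If B ∈ GL(d,ℝ) has at least one irrational entry (i.e. B ∉ GL(d,ℚ)), then the commutator subgroup [G,G] of G = ⟨T_k, M_l : k ∈ ℤ^d, l ∈ Bℤ^d⟩ is an infinite subgroup of the circle; equivalently, the set {e^{-2πi⟨l,k⟩} : k ∈ ℤ^d, l ∈ Bℤ^d} generates an infinite (dense) subgroup of 𝕋. -/

import Mathlib

noncomputable section

open Complex

/-- The real dot product on `Fin d → ℝ`. -/
def dotR {d : ℕ} (a b : Fin d → ℝ) : ℝ := ∑ i, a i * b i

/-- `e2pi t = exp (2 π i t)`. -/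
def e2pi (t : ℝ) : ℂ := Complex.exp (2 * Real.pi * Complex.I * t)

lemma e2pi_add (s t : ℝ) : e2pi (s + t) = e2pi s * e2pi t := by
  rw [e2pi, e2pi, e2pi, ← Complex.exp_add]
  congr 1
  push_cast
  ring

lemma e2pi_zero : e2pi 0 = 1 := by simp [e2pi]

lemma e2pi_neg_mul (t : ℝ) : e2pi (-t) * e2pi t = 1 := by
  rw [← e2pi_add, neg_add_cancel, e2pi_zero]

/-- Translation operator `T_k f (x) = f (x - k)`, as a bijection of functions. -/
def Tr {d : ℕ} (k : Fin d → ℝ) : Equiv.Perm ((Fin d → ℝ) → ℂ) where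
  toFun f := fun x => f (x - k)
  invFun f := fun x => f (x + k)
  left_inv f := by funext x; simp
  right_inv f := by funext x; simp

/-- Modulation operator `M_l f (x) = e^{2πi⟨l,x⟩} f (x)`. -/
def Mo {d : ℕ} (l : Fin d → ℝ) : Equiv.Perm ((Fin d → ℝ) → ℂ) where
  toFun f := fun x => e2pi (dotR l x) * f x
  invFun f := fun x => e2pi (-(dotR l x)) * f x
  left_inv f := by
    funext x; dsimp; rw [← mul_assoc, e2pi_neg_mul, one_mul]
  right_inv f := by
    funext x; dsimp
    rw [← mul_assoc, mul_comm (e2pi (dotR l x)), e2pi_neg_mul, one_mul]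

/-- Scalar operator: multiplication by the unimodular constant `e^{2πiθ}`. -/
def Sc {d : ℕ} (θ : ℝ) : Equiv.Perm ((Fin d → ℝ) → ℂ) where
  toFun f := fun x => e2pi θ * f x
  invFun f := fun x => e2pi (-θ) * f x
  left_inv f := by
    funext x; dsimp; rw [← mul_assoc, e2pi_neg_mul, one_mul]
  right_inv f := by
    funext x; dsimp
    rw [← mul_assoc, mul_comm (e2pi θ), e2pi_neg_mul, one_mul]

/-- The time–frequency group `G = ⟨T_k, M_l : k ∈ ℤ^d, l ∈ Bℤ^d⟩`. -/
def TFGroup {d : ℕ} (B : Matrix (Fin d) (Fin d) ℝ) :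
    Subgroup (Equiv.Perm ((Fin d → ℝ) → ℂ)) :=
  Subgroup.closure
    ({g | ∃ k : Fin d → ℤ, g = Tr (fun i => (k i : ℝ))} ∪
     {g | ∃ z : Fin d → ℤ, g = Mo (B.mulVec (fun i => (z i : ℝ)))})

open scoped commutatorElement

lemma dotR_sub {d : ℕ} (l x k : Fin d → ℝ) : dotR l (x - k) = dotR l x - dotR l k := by
  simp [dotR, mul_sub, Finset.sum_sub_distrib]

lemma Sc_add {d : ℕ} (s t : ℝ) : (Sc (s + t) : Equiv.Perm ((Fin d → ℝ) → ℂ)) = Sc s * Sc t := by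
  apply Equiv.ext; intro f; funext x
  simp [Sc, Equiv.Perm.mul_apply, e2pi_add, mul_assoc]

lemma Sc_zero {d : ℕ} : (Sc 0 : Equiv.Perm ((Fin d → ℝ) → ℂ)) = 1 := by
  apply Equiv.ext; intro f; funext x; simp [Sc, e2pi_zero]

lemma Sc_inv {d : ℕ} (t : ℝ) : (Sc t : Equiv.Perm ((Fin d → ℝ) → ℂ))⁻¹ = Sc (-t) :=
  inv_eq_of_mul_eq_one_right (by rw [← Sc_add, add_neg_cancel, Sc_zero])

lemma Sc_zpow {d : ℕ} (t : ℝ) (n : ℤ) :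
    (Sc t : Equiv.Perm ((Fin d → ℝ) → ℂ)) ^ n = Sc (n * t) := by
  induction n using Int.induction_on with
  | zero => simpa using Sc_zero.symm
  | succ n ih => rw [zpow_add_one, ih, ← Sc_add]; push_cast; ring_nf
  | pred n ih => rw [zpow_sub_one, ih, Sc_inv, ← Sc_add]; push_cast; ring_nf

lemma e2pi_inj {a b : ℝ} (h : e2pi a = e2pi b) : ∃ n : ℤ, a - b = n := by
  have h1 : e2pi (a - b) = 1 := by
    have := e2pi_add (a - b) b
    rw [sub_add_cancel, h] at this
    have hb : e2pi b ≠ 0 := by simp [e2pi, Complex.exp_ne_zero]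
    field_simp at this ⊢
    exact this.symm
  rw [e2pi, Complex.exp_eq_one_iff] at h1
  obtain ⟨n, hn⟩ := h1
  refine ⟨n, ?_⟩
  have hI : (Complex.I : ℂ) ≠ 0 := Complex.I_ne_zero
  have hpi : (Real.pi : ℂ) ≠ 0 := by exact_mod_cast Real.pi_ne_zero
  have h2 : (2 * Real.pi * Complex.I : ℂ) ≠ 0 := by simp [hpi, hI]
  have : ((a - b : ℝ) : ℂ) = n := by
    apply mul_left_cancel₀ h2
    rw [hn]; ring
  exact_mod_cast this

lemma Sc_inj {d : ℕ} {a b : ℝ} (h : (Sc a : Equiv.Perm ((Fin d → ℝ) → ℂ)) = Sc b) :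
    ∃ n : ℤ, a - b = n := by
  have := congrFun (congrFun (congrArg
    (fun (e : Equiv.Perm ((Fin d → ℝ) → ℂ)) => (e : ((Fin d → ℝ) → ℂ) → ((Fin d → ℝ) → ℂ))) h)
    (fun _ => 1)) 0
  simp [Sc] at this
  exact e2pi_inj this

lemma comm_Tr_Mo {d : ℕ} (k l : Fin d → ℝ) : ⁅Tr k, Mo l⁆ = Sc (-(dotR l k)) := by
  apply Equiv.ext; intro f; funext x
  show ((Tr k * Mo l * (Tr k)⁻¹ * (Mo l)⁻¹) f) x = _
  simp only [Equiv.Perm.mul_apply, Tr, Mo, Sc, Equiv.coe_fn_mk, Equiv.Perm.inv_def,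
    Equiv.coe_fn_symm_mk]
  rw [sub_add_cancel, ← mul_assoc, ← e2pi_add]
  congr 2
  rw [dotR_sub]; ring

lemma dot_single {d : ℕ} (B : Matrix (Fin d) (Fin d) ℝ) (i j : Fin d) :
    dotR (B.mulVec (fun j' => (((if j' = j then 1 else 0 : ℤ)) : ℝ)))
      (fun i' => (((if i' = i then 1 else 0 : ℤ)) : ℝ)) = B i j := by
  simp [dotR, Matrix.mulVec, dotProduct, apply_ite, mul_ite,
    Finset.sum_ite_eq', Finset.sum_ite_eq]

lemma Sc_pow_inj {d : ℕ} {α : ℝ} (hirr : ∀ q : ℚ, α ≠ (q : ℝ)) {m n : ℤ}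
    (h : (Sc (-α) : Equiv.Perm ((Fin d → ℝ) → ℂ)) ^ m = (Sc (-α)) ^ n) : m = n := by
  rw [Sc_zpow, Sc_zpow] at h
  obtain ⟨z, hz⟩ := Sc_inj h
  by_contra hmn
  have hne : ((n : ℝ) - m) ≠ 0 := by
    have h' : (n : ℝ) ≠ (m : ℝ) := by exact_mod_cast Ne.symm hmn
    exact sub_ne_zero.mpr h'
  apply hirr ((z : ℚ) / ((n : ℚ) - (m : ℚ)))
  have : ((n : ℝ) - m) * α = z := by linarith [hz]
  push_cast
  field_simp
  linarith [this]

/-- If `B ∈ GL(d,ℝ)` has at least one irrational entry (`B ∉ GL(d,ℚ)`),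
then the commutator subgroup `[G,G]` of `G = ⟨T_k, M_l : k ∈ ℤ^d, l ∈ Bℤ^d⟩` is infinite;
equivalently, the scalars `e^{-2πi⟨l,k⟩}` (`k ∈ ℤ^d`, `l ∈ Bℤ^d`) generate an infinite
subgroup of the circle. -/
theorem stmt3 {d : ℕ} (B : Matrix (Fin d) (Fin d) ℝ) (hB : IsUnit B.det)
    (hBirr : ¬ ∀ i j, ∃ q : ℚ, B i j = (q : ℝ)) :
    Infinite ↥⁅TFGroup B, TFGroup B⁆ ∧
    Infinite ↥(Subgroup.closure {g : Equiv.Perm ((Fin d → ℝ) → ℂ) | ∃ k z : Fin d → ℤ,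
      g = Sc (-(dotR (B.mulVec (fun i => (z i : ℝ))) (fun i => (k i : ℝ))))}) := by
  push_neg at hBirr
  obtain ⟨i, j, hirr⟩ := hBirr
  set α := B i j with hα
  have hdot : dotR (B.mulVec (fun j' => (((if j' = j then 1 else 0 : ℤ)) : ℝ)))
      (fun i' => (((if i' = i then 1 else 0 : ℤ)) : ℝ)) = α := dot_single B i j
  have hcomm : ⁅Tr (fun i' => (((if i' = i then 1 else 0 : ℤ)) : ℝ)),
      Mo (B.mulVec (fun j' => (((if j' = j then 1 else 0 : ℤ)) : ℝ)))⁆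
      = (Sc (-α) : Equiv.Perm ((Fin d → ℝ) → ℂ)) := by
    rw [comm_Tr_Mo, hdot]
  constructor
  · have hT : Tr (fun i' => (((if i' = i then 1 else 0 : ℤ)) : ℝ)) ∈ TFGroup B :=
      Subgroup.subset_closure (Or.inl ⟨fun i' => if i' = i then 1 else 0, rfl⟩)
    have hM : Mo (B.mulVec (fun j' => (((if j' = j then 1 else 0 : ℤ)) : ℝ))) ∈ TFGroup B :=
      Subgroup.subset_closure (Or.inr ⟨fun j' => if j' = j then 1 else 0, rfl⟩)
    have hC : (Sc (-α) : Equiv.Perm ((Fin d → ℝ) → ℂ)) ∈ ⁅TFGroup B, TFGroup B⁆ := by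
      rw [← hcomm]; exact Subgroup.commutator_mem_commutator hT hM
    refine Infinite.of_injective
      (fun n : ℤ => (⟨(Sc (-α)) ^ n, zpow_mem hC n⟩ : ↥⁅TFGroup B, TFGroup B⁆)) ?_
    intro m n h
    exact Sc_pow_inj hirr (Subtype.ext_iff.mp h)
  · have hC : (Sc (-α) : Equiv.Perm ((Fin d → ℝ) → ℂ)) ∈
        Subgroup.closure {g : Equiv.Perm ((Fin d → ℝ) → ℂ) | ∃ k z : Fin d → ℤ,
          g = Sc (-(dotR (B.mulVec (fun i => (z i : ℝ))) (fun i => (k i : ℝ))))} :=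
      Subgroup.subset_closure ⟨fun i' => if i' = i then 1 else 0,
        fun j' => if j' = j then 1 else 0, by rw [hdot]⟩
    refine Infinite.of_injective (fun n : ℤ => (⟨(Sc (-α)) ^ n, zpow_mem hC n⟩ : _)) ?_
    intro m n h
    exact Sc_pow_inj hirr (Subtype.ext_iff.mp h)
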